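/- Every coloured k-clique satisfies k ≤ m + 2. Consequently, if Q is an m-coloured quiver in the class Q_n^m, then every clique of Q has at most m + 2 vertices, i.e. the clique number satisfies ω(Q) ≤ m + 2; moreover this bound is attained by some quiver in the class. -/
import Mathlib


namespace MutClassAn

open Finset

variable {V : Type} [Fintype V] [DecidableEq V]

/-- `M i j c` is the number of arrows from `i` to `j` of colour `c`.
An `m`-coloured quiver has no loops, is monochromatic and skew-symmetric
(`c.rev = m - c` in `Fin (m+1)`). -/
def IsColouredQuiver {m : ℕ} (M : V → V → Fin (m + 1) → ℕ) : Prop :=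
  (∀ i c, M i i c = 0) ∧
  (∀ i j c c', M i j c ≠ 0 → M i j c' ≠ 0 → c = c') ∧
  (∀ i j c, M i j c = M j i c.rev)

/-- A coloured quiver is simple if there is at most one arrow between any two
vertices in each direction. -/
def IsSimpleCQ {m : ℕ} (M : V → V → Fin (m + 1) → ℕ) : Prop :=
  ∀ i j : V, (∑ c, M i j c) ≤ 1

/-- Adjacency in the underlying graph. -/
def CQAdj {m : ℕ} (M : V → V → Fin (m + 1) → ℕ) (i j : V) : Prop :=
  i ≠ j ∧ ∃ c, M i j c ≠ 0

/-- The colour of the (unique, for simple quivers) arrow from `i` to `j`. -/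
def colourOf {m : ℕ} (M : V → V → Fin (m + 1) → ℕ) (i j : V) : ℕ :=
  ∑ c : Fin (m + 1), M i j c * c.val

/-- Buan–Thomas coloured quiver mutation at the vertex `j`. -/
def mutate {m : ℕ} (M : V → V → Fin (m + 1) → ℕ) (j : V) :
    V → V → Fin (m + 1) → ℕ := fun i k c =>
  if k = j then M i k (c + 1)
  else if i = j then M i k (c - 1)
  else ((M i k c : ℤ) - ∑ t ∈ Finset.univ.filter (fun t => t ≠ c), (M i k t : ℤ)
      + ((M i j c : ℤ) - (M i j (c - 1) : ℤ)) * (M j k 0 : ℤ)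
      + (M i j (Fin.last m) : ℤ) * ((M j k c : ℤ) - (M j k (c + 1) : ℤ))).toNat

/-- Mutation equivalence: the equivalence relation generated by single mutations. -/
def MutEquiv {m : ℕ} (M M' : V → V → Fin (m + 1) → ℕ) : Prop :=
  Relation.EqvGen (fun A B => ∃ v, mutate A v = B) M M'

/-- A hole is an induced cycle of length at least `4` in the underlying graph. -/
def HasHole {m : ℕ} (M : V → V → Fin (m + 1) → ℕ) : Prop :=
  ∃ k : ℕ, 4 ≤ k ∧ ∃ x : ZMod k → V, Function.Injective x ∧
    (∀ i, CQAdj M (x i) (x (i + 1))) ∧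
    ∀ i j : ZMod k, i ≠ j → j ≠ i + 1 → i ≠ j + 1 → ¬ CQAdj M (x i) (x j)

/-- A clique: a set of pairwise adjacent vertices. -/
def IsCliqueCQ {m : ℕ} (M : V → V → Fin (m + 1) → ℕ) (S : Set V) : Prop :=
  S.Pairwise (CQAdj M)

/-- The set of neighbours of a vertex. -/
def nbrs {m : ℕ} (M : V → V → Fin (m + 1) → ℕ) (v : V) : Set V :=
  {u | CQAdj M v u}

/-- Connectedness of the underlying graph. -/
def CQConnected {m : ℕ} (M : V → V → Fin (m + 1) → ℕ) : Prop :=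
  ∀ u w : V, Relation.ReflTransGen (CQAdj M) u w

/-- Condition (1) of the class `𝒬ₙᵐ`: the neighbourhood of every vertex is covered
by two cliques of sizes `r, k ≤ m + 2` with `r + k = z + 2`, with no arrows between
the two cliques away from the vertex. -/
def Cond1 {m : ℕ} (M : V → V → Fin (m + 1) → ℕ) : Prop :=
  ∀ v : V, (nbrs M v).Nonempty →
    ∃ R K : Finset V, v ∈ R ∧ v ∈ K ∧ IsCliqueCQ M ↑R ∧ IsCliqueCQ M ↑K ∧
      R.card + K.card = (nbrs M v).ncard + 2 ∧ R.card ≤ m + 2 ∧ K.card ≤ m + 2 ∧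
      (∀ u ∈ nbrs M v, u ∈ R ∨ u ∈ K) ∧
      ∀ a ∈ R, a ≠ v → ∀ b ∈ K, b ≠ v → ¬ CQAdj M a b

/-- Condition (2) of the class `𝒬ₙᵐ`: every triangle inside a clique has colour
sum `m - 1` along one of its two orientations (sums taken in `ℤ`). -/
def Cond2 {m : ℕ} (M : V → V → Fin (m + 1) → ℕ) : Prop :=
  ∀ v1 v2 v3 : V, v1 ≠ v2 → v2 ≠ v3 → v1 ≠ v3 →
    CQAdj M v1 v2 → CQAdj M v2 v3 → CQAdj M v1 v3 →
    ((colourOf M v2 v1 : ℤ) + (colourOf M v1 v3 : ℤ) + (colourOf M v3 v2 : ℤ)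
        = (m : ℤ) - 1 ∨
      ((m : ℤ) - colourOf M v2 v1) + ((m : ℤ) - colourOf M v1 v3)
          + ((m : ℤ) - colourOf M v3 v2) = (m : ℤ) - 1)

/-- Membership in the class `𝒬ₙᵐ` (`n` being the cardinality of the vertex set). -/
def MemQClass {m : ℕ} (M : V → V → Fin (m + 1) → ℕ) : Prop :=
  IsColouredQuiver M ∧ IsSimpleCQ M ∧ CQConnected M ∧ ¬ HasHole M ∧ Cond1 M ∧ Cond2 M

/-- An `Aₙ`-quiver: the underlying graph is the path graph on the vertex set. -/
def IsAnQuiver {m : ℕ} (M : V → V → Fin (m + 1) → ℕ) : Prop :=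
  ∃ e : Fin (Fintype.card V) ≃ V,
    ∀ i j : Fin (Fintype.card V),
      CQAdj M (e i) (e j) ↔ (i.val + 1 = j.val ∨ j.val + 1 = i.val)

/-- The coloured quiver on `Fin n` whose underlying graph is the path
`0 — 1 — ⋯ — (n-1)`, with the arrow `j+1 → j` coloured `c j` and the arrow
`j → j+1` coloured `m - c j`. -/
def pathQuiver (m n : ℕ) (c : ℕ → Fin (m + 1)) :
    Fin n → Fin n → Fin (m + 1) → ℕ := fun i j d =>
  if j.val + 1 = i.val ∧ d = c j.val then 1
  else if i.val + 1 = j.val ∧ d = (c i.val).rev then 1 else 0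

/-- Delete all arrows between vertices of `S`. -/
def deleteArrows {m : ℕ} (M : V → V → Fin (m + 1) → ℕ) (S : Finset V) :
    V → V → Fin (m + 1) → ℕ := fun i j c =>
  if i ∈ S ∧ j ∈ S then 0 else M i j c

/-- The connected component of `u` is an `A_k`-quiver (a path) for some `k ≥ 1`. -/
def ComponentIsPath {m : ℕ} (M : V → V → Fin (m + 1) → ℕ) (u : V) : Prop :=
  ∃ (k : ℕ) (x : Fin k → V), 1 ≤ k ∧ Function.Injective x ∧
    Set.range x = {w | Relation.ReflTransGen (CQAdj M) u w} ∧
    ∀ i j : Fin k, CQAdj M (x i) (x j) ↔ (i.val + 1 = j.val ∨ j.val + 1 = i.val)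

/-- An almost extremal clique: deleting its arrows leaves a connected component
which is an `A_k`-quiver for some `k ≥ 1`. -/
def AlmostExtremalClique {m : ℕ} (M : V → V → Fin (m + 1) → ℕ) (S : Finset V) : Prop :=
  IsCliqueCQ M ↑S ∧ ∃ u : V, ComponentIsPath (deleteArrows M S) u

/-- An extremal clique: deleting its arrows leaves a single-vertex component. -/
def ExtremalClique {m : ℕ} (M : V → V → Fin (m + 1) → ℕ) (S : Finset V) : Prop :=
  IsCliqueCQ M ↑S ∧
    ∃ u : V, {w | Relation.ReflTransGen (CQAdj (deleteArrows M S)) u w} = {u}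

/-- A coloured clique structure on a vertex type: colours `c i j ∈ {0,…,m}` with
skew-symmetry `c j i = m - c i j` and the triangle condition. -/
def IsCliqueColouring (m : ℕ) {W : Type} (c : W → W → ℕ) : Prop :=
  (∀ i j : W, i ≠ j → c i j ≤ m) ∧
  (∀ i j : W, i ≠ j → c i j + c j i = m) ∧
  ∀ i j l : W, i ≠ j → j ≠ l → i ≠ l →
    ((c i j : ℤ) + (c j l : ℤ) + (c l i : ℤ) = (m : ℤ) - 1 ∨
      (c i j : ℤ) + (c j l : ℤ) + (c l i : ℤ) = 2 * (m : ℤ) + 1)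

/-- Cyclic successor in `Fin k`. -/
def cyc {k : ℕ} (i : Fin k) : Fin k :=
  ⟨(i.val + 1) % k, Nat.mod_lt _ i.pos⟩

/-- The weight of the Hamiltonian cycle `x 0 → x 1 → ⋯ → x (k-1) → x 0`:
the sum of the colours of its arrows. -/
def cycleWeight {W : Type} (c : W → W → ℕ) {k : ℕ} (x : Fin k → W) : ℤ :=
  ∑ i : Fin k, (c (x i) (x (cyc i)) : ℤ)

/-- The Hamiltonian cycle on `k+1` vertices obtained from the cycle
`x 0 → ⋯ → x (k-1) → x 0` by inserting the vertex `x (Fin.last k)`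
immediately after `x j`. -/
def insertAfter {W : Type} {k : ℕ} (x : Fin (k + 1) → W) (j : Fin k) :
    Fin (k + 1) → W := fun i =>
  if i = 0 then x (Fin.last k)
  else x (Fin.castSucc ⟨(j.val + i.val) % k, Nat.mod_lt _ j.pos⟩)

theorem card_le_of_cliqueColouring (m : ℕ) (W : Type) [Fintype W] (c : W → W → ℕ)
    (h : IsCliqueColouring m c) : Fintype.card W ≤ m + 2 := by
  classical
  obtain ⟨hle, hskew, htri⟩ := h
  rcases isEmpty_or_nonempty W with hW | hW
  · simp [Fintype.card_eq_zero]
  obtain ⟨i0⟩ := hW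
  have hinj : Function.Injective (fun j : {j : W // j ≠ i0} =>
      (⟨c i0 j.1, by have := hle i0 j.1 (Ne.symm j.2); omega⟩ : Fin (m + 1))) := by
    intro j l hjl
    simp only [Fin.mk.injEq] at hjl
    by_contra hne
    have hne' : (j : W) ≠ l := fun h => hne (Subtype.ext h)
    have h1 := htri i0 j.1 l.1 (Ne.symm j.2) hne' (Ne.symm l.2)
    have h2 := hskew i0 l.1 (Ne.symm l.2)
    have h3 := hle j.1 l.1 hne'
    omega
  have hcard := Fintype.card_le_of_injective _ hinj
  rw [Fintype.card_fin] at hcard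
  have hc1 : Fintype.card {j : W // j ≠ i0} = Fintype.card W - 1 := by
    simp [Fintype.card_subtype_compl]
  have hpos : 1 ≤ Fintype.card W := Fintype.card_pos_iff.mpr ⟨i0⟩
  omega

theorem arrow_one {m : ℕ} {M : V → V → Fin (m + 1) → ℕ}
    (hq : IsColouredQuiver M) (hs : IsSimpleCQ M) {i j : V} (h : CQAdj M i j) :
    ∃ c0 : Fin (m + 1), M i j c0 = 1 ∧ ∀ c, c ≠ c0 → M i j c = 0 := by
  obtain ⟨hne, c0, hc0⟩ := h
  have hz : ∀ c, c ≠ c0 → M i j c = 0 := by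
    intro c hc
    by_contra hcc
    exact hc (hq.2.1 i j c c0 hcc hc0)
  refine ⟨c0, ?_, hz⟩
  have hsum := hs i j
  rw [Finset.sum_eq_single c0 (fun b _ hb => hz b hb) (by simp)] at hsum
  omega

theorem colourOf_of_one {m : ℕ} {M : V → V → Fin (m + 1) → ℕ} {i j : V}
    {c0 : Fin (m + 1)} (h1 : M i j c0 = 1) (h0 : ∀ c, c ≠ c0 → M i j c = 0) :
    colourOf M i j = c0.val := by
  unfold colourOf
  rw [Finset.sum_eq_single c0 (fun b _ hb => by simp [h0 b hb]) (by simp), h1, one_mul]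

theorem colourOf_skew {m : ℕ} {M : V → V → Fin (m + 1) → ℕ}
    (hq : IsColouredQuiver M) (hs : IsSimpleCQ M) {i j : V} (h : CQAdj M i j) :
    colourOf M i j ≤ m ∧ colourOf M i j + colourOf M j i = m := by
  obtain ⟨c0, h1, h0⟩ := arrow_one hq hs h
  have e1 := colourOf_of_one h1 h0
  have h1' : M j i c0.rev = 1 := by rw [hq.2.2 j i c0.rev, Fin.rev_rev]; exact h1
  have h0' : ∀ c, c ≠ c0.rev → M j i c = 0 := by
    intro c hc
    rw [hq.2.2 j i c]
    exact h0 c.rev (fun hh => hc (by simpa using congrArg Fin.rev hh))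
  have e2 := colourOf_of_one h1' h0'
  have hv : c0.rev.val = m - c0.val := by rw [Fin.val_rev]; omega
  have hlt := c0.is_lt
  omega

theorem clique_card_le (m : ℕ) (M : V → V → Fin (m + 1) → ℕ) (hM : MemQClass M)
    (S : Finset V) (hS : IsCliqueCQ M ↑S) : S.card ≤ m + 2 := by
  obtain ⟨hq, hs, -, -, -, h2⟩ := hM
  have hadj : ∀ a b : {x // x ∈ S}, a ≠ b → CQAdj M a.1 b.1 := by
    intro a b hab
    exact hS (Finset.mem_coe.mpr a.2) (Finset.mem_coe.mpr b.2) (fun h => hab (Subtype.ext h))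
  rw [← Fintype.card_coe]
  refine card_le_of_cliqueColouring m _ (fun a b => colourOf M a.1 b.1) ⟨?_, ?_, ?_⟩
  · intro a b hab; exact (colourOf_skew hq hs (hadj a b hab)).1
  · intro a b hab; exact (colourOf_skew hq hs (hadj a b hab)).2
  · intro i j l hij hjl hil
    have h := h2 j.1 i.1 l.1 (fun h => hij (Subtype.ext h).symm) (fun h => hil (Subtype.ext h))
      (fun h => hjl (Subtype.ext h)) (hadj j i (Ne.symm hij)) (hadj i l hil) (hadj j l hjl)
    beta_reduce
    rcases h with h | h
    · exact Or.inl h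
    · exact Or.inr (by omega)

/-- The colour pattern of the extremal clique. -/
def pcol (m a b : ℕ) : ℕ := if a < b then b - a - 1 else m + 1 + b - a

/-- The extremal quiver: a single clique on `m + 2` vertices. -/
def cliqueQuiver (m : ℕ) : Fin (m + 2) → Fin (m + 2) → Fin (m + 1) → ℕ :=
  fun i j d => if i ≠ j ∧ d.val = pcol m i.val j.val then 1 else 0

theorem pcol_le {m a b : ℕ} (hab : a ≠ b) (ha : a < m + 2) (hb : b < m + 2) :
    pcol m a b ≤ m := by
  unfold pcol; split <;> omega

theorem pcol_skew {m a b : ℕ} (hab : a ≠ b) (ha : a < m + 2) (hb : b < m + 2) :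
    pcol m a b + pcol m b a = m := by
  unfold pcol; split <;> split <;> omega

theorem pcol_tri (m : ℕ) {a b c : ℕ} (ha : a < m + 2) (hb : b < m + 2) (hc : c < m + 2)
    (hab : a ≠ b) (hbc : b ≠ c) (hac : a ≠ c) :
    ((pcol m a b : ℤ) + pcol m b c + pcol m c a = (m : ℤ) - 1 ∨
      (pcol m a b : ℤ) + pcol m b c + pcol m c a = 2 * (m : ℤ) + 1) := by
  unfold pcol; split <;> split <;> split <;> omega

theorem cq_arrow (m : ℕ) {i j : Fin (m + 2)} (h : i ≠ j) :
    ∃ c0 : Fin (m + 1), c0.val = pcol m i.val j.val ∧ cliqueQuiver m i j c0 = 1 ∧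
      ∀ c, c ≠ c0 → cliqueQuiver m i j c = 0 := by
  have hne : i.val ≠ j.val := fun hh => h (Fin.ext hh)
  have hb : pcol m i.val j.val ≤ m := pcol_le hne i.is_lt j.is_lt
  refine ⟨⟨pcol m i.val j.val, by omega⟩, rfl, by simp [cliqueQuiver, h], ?_⟩
  intro c hc
  have : ¬(i ≠ j ∧ c.val = pcol m i.val j.val) := by
    rintro ⟨-, hcc⟩; exact hc (Fin.ext hcc)
  simp only [cliqueQuiver]
  exact if_neg this

theorem cq_adj (m : ℕ) (i j : Fin (m + 2)) : CQAdj (cliqueQuiver m) i j ↔ i ≠ j := by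
  constructor
  · exact fun h => h.1
  · intro h
    obtain ⟨c0, -, h1, -⟩ := cq_arrow m h
    exact ⟨h, c0, by rw [h1]; exact one_ne_zero⟩

theorem cq_colour (m : ℕ) {i j : Fin (m + 2)} (h : i ≠ j) :
    colourOf (cliqueQuiver m) i j = pcol m i.val j.val := by
  obtain ⟨c0, hv, h1, h0⟩ := cq_arrow m h
  rw [colourOf_of_one h1 h0, hv]

theorem cliqueQuiver_mem (m : ℕ) : MemQClass (cliqueQuiver m) := by
  have hcq : IsColouredQuiver (cliqueQuiver m) := by
    refine ⟨fun i c => by simp [cliqueQuiver], ?_, ?_⟩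
    · intro i j c c' hc hc'
      have h1 : i ≠ j ∧ c.val = pcol m i.val j.val := by
        by_contra hcon; exact hc (if_neg hcon)
      have h2 : i ≠ j ∧ c'.val = pcol m i.val j.val := by
        by_contra hcon; exact hc' (if_neg hcon)
      exact Fin.ext (h1.2.trans h2.2.symm)
    · intro i j c
      by_cases hij : i = j
      · subst hij; simp [cliqueQuiver]
      · have hne : i.val ≠ j.val := fun hh => hij (Fin.ext hh)
        have hb := pcol_le hne i.is_lt j.is_lt
        have hb' := pcol_le (Ne.symm hne) j.is_lt i.is_lt
        have hsk := pcol_skew hne i.is_lt j.is_lt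
        have hv : c.rev.val = m - c.val := by rw [Fin.val_rev]; omega
        have hlt := c.is_lt
        simp only [cliqueQuiver]
        by_cases hc : c.val = pcol m i.val j.val
        · rw [if_pos ⟨hij, hc⟩, if_pos ⟨Ne.symm hij, by omega⟩]
        · rw [if_neg (by rintro ⟨-, hh⟩; exact hc hh),
            if_neg (by rintro ⟨-, hh⟩; rw [hv] at hh; omega)]
  have hsimple : IsSimpleCQ (cliqueQuiver m) := by
    intro i j
    by_cases hij : i = j
    · subst hij; simp [cliqueQuiver]
    · obtain ⟨c0, -, h1, h0⟩ := cq_arrow m hij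
      rw [Finset.sum_eq_single c0 (fun b _ hb => h0 b hb) (by simp), h1]
  refine ⟨hcq, hsimple, ?_, ?_, ?_, ?_⟩
  · -- connected
    intro u w
    by_cases h : u = w
    · subst h; exact Relation.ReflTransGen.refl
    · exact Relation.ReflTransGen.single ((cq_adj m u w).mpr h)
  · -- no hole
    rintro ⟨k, hk4, x, hinj, -, hnon⟩
    haveI : NeZero k := ⟨by omega⟩
    have hval : ∀ a : ℕ, a < k → ((a : ZMod k)).val = a := fun a ha => ZMod.val_cast_of_lt ha
    have e0 : (0 : ZMod k) = ((0 : ℕ) : ZMod k) := by norm_cast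
    have e1 : ((0 : ZMod k) + 1) = ((1 : ℕ) : ZMod k) := by push_cast; ring
    have e2 : (2 : ZMod k) = ((2 : ℕ) : ZMod k) := by norm_cast
    have e3 : ((2 : ZMod k) + 1) = ((3 : ℕ) : ZMod k) := by push_cast; ring
    have h02 : (0 : ZMod k) ≠ 2 := by
      intro h; rw [e0, e2] at h
      have := congrArg ZMod.val h
      rw [hval 0 (by omega), hval 2 (by omega)] at this; omega
    have h21 : (2 : ZMod k) ≠ (0 : ZMod k) + 1 := by
      intro h; rw [e2, e1] at h
      have := congrArg ZMod.val h
      rw [hval 2 (by omega), hval 1 (by omega)] at this; omega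
    have h03 : (0 : ZMod k) ≠ (2 : ZMod k) + 1 := by
      intro h; rw [e0, e3] at h
      have := congrArg ZMod.val h
      rw [hval 0 (by omega), hval 3 (by omega)] at this; omega
    exact hnon 0 2 h02 h21 h03 ((cq_adj m _ _).mpr (hinj.ne h02))
  · -- Cond1
    intro v hv
    have hnb : nbrs (cliqueQuiver m) v = ↑(Finset.univ.erase v) := by
      ext u
      simp only [nbrs, Set.mem_setOf_eq, cq_adj, Finset.coe_erase, Set.mem_diff,
        Set.mem_singleton_iff, Finset.coe_univ, Set.mem_univ, true_and]
      exact ne_comm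
    have hncard : (nbrs (cliqueQuiver m) v).ncard = m + 1 := by
      rw [hnb, Set.ncard_coe_finset, Finset.card_erase_of_mem (Finset.mem_univ v),
        Finset.card_univ, Fintype.card_fin]
      omega
    refine ⟨Finset.univ, {v}, Finset.mem_univ v, Finset.mem_singleton_self v, ?_, ?_, ?_, ?_, ?_, ?_, ?_⟩
    · intro a _ b _ hab; exact (cq_adj m a b).mpr hab
    · intro a ha b hb hab
      simp only [Finset.coe_singleton, Set.mem_singleton_iff] at ha hb
      exact absurd (ha.trans hb.symm) hab
    · rw [hncard, Finset.card_univ, Fintype.card_fin, Finset.card_singleton]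
    · rw [Finset.card_univ, Fintype.card_fin]
    · rw [Finset.card_singleton]; omega
    · exact fun u _ => Or.inl (Finset.mem_univ u)
    · intro a _ ha b hb hbv
      rw [Finset.mem_singleton] at hb
      exact absurd hb hbv
  · -- Cond2
    intro v1 v2 v3 h12 h23 h13 a12 a23 a13
    rw [cq_colour m (Ne.symm h12), cq_colour m h13, cq_colour m (Ne.symm h23)]
    have hne21 : v2.val ≠ v1.val := fun hh => h12 (Fin.ext hh).symm
    have hne13 : v1.val ≠ v3.val := fun hh => h13 (Fin.ext hh)
    have hne23 : v2.val ≠ v3.val := fun hh => h23 (Fin.ext hh)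
    rcases pcol_tri m v2.is_lt v1.is_lt v3.is_lt hne21 hne13 (hne23) with h | h
    · exact Or.inl h
    · exact Or.inr (by omega)

/-- Every coloured clique has at most `m + 2` vertices; consequently the clique
number of any quiver in the class `𝒬ₙᵐ` is at most `m + 2`, and this bound is
attained by some quiver in the class. -/
theorem clique_number_bound (m : ℕ) (hm : 1 ≤ m) :
    (∀ (W : Type) [Fintype W], ∀ c : W → W → ℕ,
        IsCliqueColouring m c → Fintype.card W ≤ m + 2) ∧
    (∀ (V : Type) [Fintype V] [DecidableEq V]
        (M : V → V → Fin (m + 1) → ℕ), MemQClass M →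
        ∀ S : Finset V, IsCliqueCQ M ↑S → S.card ≤ m + 2) ∧
    (∃ (n : ℕ) (M : Fin n → Fin n → Fin (m + 1) → ℕ),
        MemQClass M ∧ ∃ S : Finset (Fin n), IsCliqueCQ M ↑S ∧ S.card = m + 2) := by
  refine ⟨fun W _ c hc => card_le_of_cliqueColouring m W c hc,
    fun V _ _ M hM S hS => clique_card_le m M hM S hS,
    m + 2, cliqueQuiver m, cliqueQuiver_mem m, Finset.univ, ?_, ?_⟩
  · intro a _ b _ hab; exact (cq_adj m a b).mpr hab
  · simp

end MutClassAn
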